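/- If g ∈ L²(𝕋³) is a nonzero solution of u(0,q)g(q) = μ φ(q)∫_{𝕋³}φ(t)g(t)dt a.e. (with φ real-analytic, μ > 0), then φ(0) = 0. -/

import Mathlib

open Real MeasureTheory

noncomputable def eps (p : Fin 3 → ℝ) : ℝ := 3 - Real.cos (p 0) - Real.cos (p 1) - Real.cos (p 2)

noncomputable def uu (p q : Fin 3 → ℝ) : ℝ := eps p + eps (p - q) + eps q

/-- The torus `𝕋³`, identified with the cube `(-π, π]³`. -/
def T3 : Set (Fin 3 → ℝ) := Set.univ.pi fun _ => Set.Ioc (-Real.pi) Real.pi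

/-- `m(p) = min_{q ∈ 𝕋³} u(p,q)`, the bottom of the essential spectrum. -/
noncomputable def mfun (p : Fin 3 → ℝ) : ℝ := sInf (uu p '' T3)

/-- The Fredholm determinant `Δ_μ(p,z) = 1 - μ ∫_{𝕋³} φ(t)²/(u(p,t) - z) dt`. -/
noncomputable def Δ (μ : ℝ) (φ : (Fin 3 → ℝ) → ℝ) (p : Fin 3 → ℝ) (z : ℝ) : ℝ :=
  1 - μ * ∫ t in T3, φ t ^ 2 / (uu p t - z)

lemma uu_zero (q : Fin 3 → ℝ) : uu 0 q = 2 * eps q := by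
  simp [uu, eps, Real.cos_neg]; ring

lemma eps_nonneg (q : Fin 3 → ℝ) : 0 ≤ eps q := by
  have h0 := Real.cos_le_one (q 0)
  have h1 := Real.cos_le_one (q 1)
  have h2 := Real.cos_le_one (q 2)
  simp only [eps]; linarith

lemma T3_measurable : MeasurableSet T3 :=
  MeasurableSet.univ_pi fun _ => measurableSet_Ioc

lemma coord_zero {x : ℝ} (hx : x ∈ Set.Ioc (-Real.pi) Real.pi) (h : Real.cos x = 1) : x = 0 := by
  have hpi := Real.pi_pos
  exact (Real.cos_eq_one_iff_of_lt_of_lt (by linarith [hx.1]) (by linarith [hx.2])).1 h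

lemma uu_zero_eq_zero {q : Fin 3 → ℝ} (hq : q ∈ T3) (h : uu 0 q = 0) : q = 0 := by
  rw [uu_zero] at h
  have key : ∀ i : Fin 3, q i ∈ Set.Ioc (-Real.pi) Real.pi := fun i => hq i (Set.mem_univ i)
  have c0 := Real.cos_le_one (q 0)
  have c1 := Real.cos_le_one (q 1)
  have c2 := Real.cos_le_one (q 2)
  simp only [eps] at h
  have h0 : q 0 = 0 := coord_zero (key 0) (by linarith)
  have h1 : q 1 = 0 := coord_zero (key 1) (by linarith)
  have h2 : q 2 = 0 := coord_zero (key 2) (by linarith)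
  funext i
  fin_cases i <;> simp only [Pi.zero_apply] <;> [exact h0; exact h1; exact h2]

lemma uu_le (q : Fin 3 → ℝ) : uu 0 q ≤ 3 * ‖q‖ ^ 2 := by
  rw [uu_zero]
  have b : ∀ i : Fin 3, 1 - Real.cos (q i) ≤ ‖q‖^2 / 2 := by
    intro i
    have h1 := Real.one_sub_sq_div_two_le_cos (x := q i)
    have h2 : |q i| ≤ ‖q‖ := by simpa using norm_le_pi_norm q i
    have h3 : |q i| ^ 2 ≤ ‖q‖ ^ 2 := pow_le_pow_left₀ (abs_nonneg _) h2 2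
    rw [sq_abs] at h3
    linarith
  have := b 0; have := b 1; have := b 2
  simp only [eps]
  linarith


/-- If a nonzero `g ∈ L²(𝕋³)` solves `u(0,q) g(q) = μ φ(q) ∫ φ(t) g(t) dt` a.e.
(`φ` real-analytic, `μ > 0`), then necessarily `φ(0) = 0`. -/
theorem stmt13 (φ : (Fin 3 → ℝ) → ℝ) (hφ : ∀ x, AnalyticAt ℝ φ x)
    (μ : ℝ) (hμ : 0 < μ) (g : (Fin 3 → ℝ) → ℝ)
    (hg2 : MemLp g 2 (volume.restrict T3))
    (hgne : ¬ (∀ᵐ q ∂(volume.restrict T3), g q = 0))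
    (heq : ∀ᵐ q ∂(volume.restrict T3),
      uu 0 q * g q = μ * φ q * ∫ t in T3, φ t * g t) :
    φ 0 = 0 := by
  by_contra hφ0
  set c : ℝ := μ * ∫ t in T3, φ t * g t with hc
  -- a.e. nonvanishing of uu 0 on T3
  have huu_ae : ∀ᵐ q ∂(volume.restrict T3), uu 0 q ≠ 0 := by
    rw [ae_restrict_iff' T3_measurable, ae_iff]
    refine measure_mono_null (fun q hq => ?_) (measure_singleton (0 : Fin 3 → ℝ))
    simp only [Set.mem_setOf_eq, not_forall, not_not] at hq
    exact uu_zero_eq_zero hq.1 hq.2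
  have hrep : ∀ᵐ q ∂(volume.restrict T3), uu 0 q * g q = c * φ q ∧ uu 0 q ≠ 0 := by
    filter_upwards [heq, huu_ae] with q h1 h2
    exact ⟨by rw [h1, hc]; ring, h2⟩
  -- c ≠ 0
  have hcne : c ≠ 0 := by
    intro h0
    refine hgne ?_
    filter_upwards [hrep] with q ⟨h1, h2⟩
    rw [h0, zero_mul] at h1
    exact (mul_eq_zero.1 h1).resolve_left h2
  -- continuity of φ at 0
  obtain ⟨δ, hδpos, hδ⟩ := Metric.continuousAt_iff.1 (hφ 0).continuousAt (|φ 0| / 2)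
    (by positivity)
  set r : ℝ := min δ 1 with hr
  have hrpos : 0 < r := lt_min hδpos one_pos
  have hr1 : r ≤ 1 := min_le_right _ _
  have hφ_lb : ∀ q ∈ Metric.ball (0 : Fin 3 → ℝ) r, |φ 0| / 2 ≤ |φ q| := by
    intro q hq
    have h1 : dist q 0 < δ := lt_of_lt_of_le (Metric.mem_ball.1 hq) (min_le_left _ _)
    have h2 := hδ h1
    rw [Real.dist_eq] at h2
    have h3 := abs_sub_abs_le_abs_sub (φ 0) (φ q)
    rw [abs_sub_comm] at h3
    linarith
  have hball_sub : Metric.ball (0 : Fin 3 → ℝ) r ⊆ T3 := by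
    intro q hq i _
    have h1 : |q i| ≤ ‖q‖ := by simpa using norm_le_pi_norm q i
    have h2 : ‖q‖ < r := by simpa using Metric.mem_ball.1 hq
    have hpi : (1:ℝ) ≤ Real.pi := by linarith [Real.pi_gt_three]
    have := abs_lt.1 (lt_of_le_of_lt h1 h2)
    exact ⟨by linarith, by linarith⟩
  -- integrability
  have hint : IntegrableOn (fun q => g q ^ 2) T3 volume := hg2.integrable_sq
  have hball_int : IntegrableOn (fun q => g q ^ 2) (Metric.ball 0 r) volume :=
    hint.mono_set hball_sub
  set M : ℝ := ∫ q in Metric.ball (0 : Fin 3 → ℝ) r, g q ^ 2 with hM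
  set K : ℝ := c ^ 2 * (φ 0) ^ 2 / 36 with hK
  have hKpos : 0 < K := by
    have h1 : 0 < c ^ 2 := sq_pos_iff.2 hcne
    have h2 : 0 < (φ 0) ^ 2 := sq_pos_iff.2 hφ0
    positivity
  set v : ENNReal := volume (Metric.ball (0 : Fin 3 → ℝ) 1) with hv
  have hvpos : 0 < v := Metric.measure_ball_pos _ _ one_pos
  have hvfin : v ≠ ⊤ := measure_ball_lt_top.ne
  have hvtR : 0 < v.toReal := ENNReal.toReal_pos hvpos.ne' hvfin
  -- per-scale lower bound
  have main : ∀ k : ℕ, K * v.toReal / r * 2 ^ k ≤ M := by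
    intro k
    set R : ℝ := r / 2 ^ k with hRdef
    have hRpos : 0 < R := by positivity
    have hRr : R ≤ r := by
      rw [hRdef]
      exact div_le_self hrpos.le (one_le_pow₀ one_le_two)
    have hsub2 : Metric.ball (0 : Fin 3 → ℝ) R ⊆ Metric.ball 0 r :=
      Metric.ball_subset_ball hRr
    -- a.e. pointwise lower bound on the small ball
    have hb : ∀ᵐ q ∂(volume.restrict (Metric.ball (0 : Fin 3 → ℝ) R)),
        K / R ^ 4 ≤ g q ^ 2 := by
      have h1 : ∀ᵐ q ∂(volume.restrict (Metric.ball (0 : Fin 3 → ℝ) R)),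
          uu 0 q * g q = c * φ q ∧ uu 0 q ≠ 0 :=
        hrep.filter_mono (ae_mono (Measure.restrict_mono (hsub2.trans hball_sub) le_rfl))
      filter_upwards [h1, ae_restrict_mem measurableSet_ball] with q hq12 hq3
      obtain ⟨hq1, hq2⟩ := hq12
      have hφq : |φ 0| / 2 ≤ |φ q| := hφ_lb q (hsub2 hq3)
      clear h1 hrep heq hgne hg2 hδ hφ_lb huu_ae hsub2 hball_sub hint hball_int
      clear_value c K M v R r
      have hu_nonneg : 0 ≤ uu 0 q := by rw [uu_zero]; linarith [eps_nonneg q]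
      have hu_pos : 0 < uu 0 q := lt_of_le_of_ne hu_nonneg (Ne.symm hq2)
      have hqnorm : ‖q‖ < R := by simpa using Metric.mem_ball.1 hq3
      have hu_le : uu 0 q ≤ 3 * R ^ 2 := by
        refine le_trans (uu_le q) ?_
        nlinarith [norm_nonneg q]
      have habs : (φ 0) ^ 2 / 4 ≤ (φ q) ^ 2 := by
        nlinarith [sq_abs (φ q), sq_abs (φ 0), abs_nonneg (φ 0)]
      have he : (uu 0 q) ^ 2 * (g q) ^ 2 = c ^ 2 * (φ q) ^ 2 := by
        rw [← mul_pow, hq1, mul_pow]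
      rw [div_le_iff₀ (by positivity)]
      rw [hK]
      have h5 : uu 0 q ^ 2 ≤ 9 * R ^ 4 := by nlinarith
      have h6 : uu 0 q ^ 2 * g q ^ 2 ≤ 9 * R ^ 4 * g q ^ 2 :=
        mul_le_mul_of_nonneg_right h5 (sq_nonneg _)
      have h7 : c ^ 2 * (φ 0 ^ 2 / 4) ≤ c ^ 2 * φ q ^ 2 :=
        mul_le_mul_of_nonneg_left habs (sq_nonneg c)
      linarith [h6, h7, he]
    -- volume of the small ball
    have hvol : volume (Metric.ball (0 : Fin 3 → ℝ) R) = ENNReal.ofReal (R ^ 3) * v := by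
      have h := Measure.addHaar_ball (volume : Measure (Fin 3 → ℝ)) 0 hRpos.le
      simpa [hv] using h
    have hvolR : (volume (Metric.ball (0 : Fin 3 → ℝ) R)).toReal = R ^ 3 * v.toReal := by
      rw [hvol, ENNReal.toReal_mul, ENNReal.toReal_ofReal (by positivity)]
    -- integral comparison
    have hconst_int : IntegrableOn (fun _ : Fin 3 → ℝ => K / R ^ 4)
        (Metric.ball (0 : Fin 3 → ℝ) R) volume := by
      refine integrableOn_const ?_
      rw [hvol]
      exact (ENNReal.mul_lt_top ENNReal.ofReal_lt_top hvfin.lt_top).ne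
    have hstep1 : K / R ^ 4 * (R ^ 3 * v.toReal)
        ≤ ∫ q in Metric.ball (0 : Fin 3 → ℝ) R, g q ^ 2 := by
      have := setIntegral_mono_ae_restrict hconst_int (hball_int.mono_set hsub2) hb
      rwa [setIntegral_const, smul_eq_mul, measureReal_def, hvolR, mul_comm (R ^ 3 * v.toReal)] at this
    have hstep2 : (∫ q in Metric.ball (0 : Fin 3 → ℝ) R, g q ^ 2) ≤ M := by
      apply setIntegral_mono_set hball_int
      · filter_upwards with q using sq_nonneg (g q)
      · exact HasSubset.Subset.eventuallyLE hsub2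
    have harith : K * v.toReal / r * 2 ^ k = K / R ^ 4 * (R ^ 3 * v.toReal) := by
      rw [hRdef]
      field_simp
    rw [harith]
    linarith
  -- contradiction
  set C : ℝ := K * v.toReal / r with hC
  have hCpos : 0 < C := by positivity
  obtain ⟨k, hk⟩ := pow_unbounded_of_one_lt (M / C) (y := (2:ℝ)) one_lt_two
  have h1 := main k
  have h2 : M / C < 2 ^ k := hk
  rw [div_lt_iff₀ hCpos] at h2
  linarith [h1, h2]
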